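/- There exists a compact metric space X (namely a two-point space), a continuous map m: X → ℝ^{2×2}_{psd}, and a convex, antitonic function Ψ: ℝ^{2×2}_{psd} → ℝ ∪ {∞} with dom Ψ = ℝ^{2×2}_{pd}, continuous on ℝ^{2×2}_{pd}, such that inf over Borel probability measures ξ on X of Ψ(M(ξ)) equals 1 but Ψ(M(ξ)) > 1 for every ξ; i.e., no optimal design exists. Concretely, take X = {x₁, x₂}, m(x₁) = diag(1,0), m(x₂) = diag(0,1), and Ψ(M) = e₁ᵀ M^{−1} e₁ for M positive definite, Ψ(M) = ∞ otherwise. -/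

import Mathlib

open Matrix MeasureTheory

/-- The information matrix `M(ξ) = ∫_X m(x) dξ(x)` of a design `ξ`, computed entrywise. -/
noncomputable def infoMatrix {X : Type*} [MeasurableSpace X] {d : ℕ}
    (m : X → Matrix (Fin d) (Fin d) ℝ) (ξ : Measure X) : Matrix (Fin d) (Fin d) ℝ :=
  Matrix.of fun i j => ∫ x, m x i j ∂ξ

/-- helper: symmetric -/
private lemma real_symm {M : Matrix (Fin 2) (Fin 2) ℝ} (hM : M.IsHermitian) : Mᵀ = M := by
  exact (by simpa [Matrix.conjTranspose] using hM : M.IsSymm)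

private lemma key_facts {M : Matrix (Fin 2) (Fin 2) ℝ} (hM : M.PosDef) :
    M *ᵥ (M⁻¹ *ᵥ Pi.single 0 1) = Pi.single 0 1 := by
  rw [Matrix.mulVec_mulVec, Matrix.mul_nonsing_inv _ (isUnit_iff_ne_zero.2 hM.det_pos.ne'),
    Matrix.one_mulVec]

private lemma key_ineq {M : Matrix (Fin 2) (Fin 2) ℝ} (hM : M.PosDef) (z : Fin 2 → ℝ) :
    2 * z 0 - z ⬝ᵥ (M *ᵥ z) ≤ M⁻¹ 0 0 := by
  set u : Fin 2 → ℝ := M⁻¹ *ᵥ Pi.single 0 1 with hu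
  have hMu : M *ᵥ u = Pi.single 0 1 := key_facts hM
  have huMz : u ⬝ᵥ (M *ᵥ z) = z 0 := by
    rw [Matrix.dotProduct_mulVec, ← Matrix.mulVec_transpose, real_symm hM.1, hMu,
      single_dotProduct, one_mul]
  have hzMu : z ⬝ᵥ (M *ᵥ u) = z 0 := by
    rw [hMu, dotProduct_single, mul_one]
  have huMu : u ⬝ᵥ (M *ᵥ u) = M⁻¹ 0 0 := by
    rw [hMu, dotProduct_single, mul_one, hu, Matrix.mulVec_single]
    simp
  have hw : 0 ≤ (z - u) ⬝ᵥ (M *ᵥ (z - u)) := by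
    simpa using hM.posSemidef.dotProduct_mulVec_nonneg (z - u)
  have expand : (z - u) ⬝ᵥ (M *ᵥ (z - u))
      = z ⬝ᵥ (M *ᵥ z) - 2 * z 0 + M⁻¹ 0 0 := by
    rw [Matrix.mulVec_sub, sub_dotProduct, dotProduct_sub, dotProduct_sub,
      huMz, hzMu, huMu]
    ring
  linarith

private lemma key_eq {M : Matrix (Fin 2) (Fin 2) ℝ} (hM : M.PosDef) :
    (M⁻¹ *ᵥ Pi.single 0 1) 0 = M⁻¹ 0 0 ∧
    (M⁻¹ *ᵥ Pi.single 0 1) ⬝ᵥ (M *ᵥ (M⁻¹ *ᵥ Pi.single 0 1)) = M⁻¹ 0 0 := by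
  have hMu := key_facts hM
  constructor
  · rw [Matrix.mulVec_single]
    simp
  · rw [hMu, dotProduct_single, mul_one, Matrix.mulVec_single]
    simp

private lemma posDef_smul {A : Matrix (Fin 2) (Fin 2) ℝ} (hA : A.PosDef) {c : ℝ} (hc : 0 < c) :
    (c • A).PosDef := by
  refine Matrix.posDef_iff_dotProduct_mulVec.mpr ⟨?_, fun x hx => ?_⟩
  · have h1 := hA.1
    unfold Matrix.IsHermitian at *
    rw [Matrix.conjTranspose_smul, h1]
    simp
  · have := hA.dotProduct_mulVec_pos hx
    rw [Matrix.smul_mulVec, dotProduct_smul]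
    exact mul_pos hc this

private lemma posDef_conv {A B : Matrix (Fin 2) (Fin 2) ℝ} (hA : A.PosDef) (hB : B.PosDef)
    {α : ℝ} (h0 : 0 < α) (h1 : α < 1) : (α • A + (1 - α) • B).PosDef :=
  (posDef_smul hA h0).add (posDef_smul hB (by linarith))

private lemma conv_real {A B : Matrix (Fin 2) (Fin 2) ℝ} (hA : A.PosDef) (hB : B.PosDef)
    {α : ℝ} (h0 : 0 ≤ α) (h1 : α ≤ 1) (hC : (α • A + (1 - α) • B).PosDef) :
    (α • A + (1 - α) • B)⁻¹ 0 0 ≤ α * (A⁻¹ 0 0) + (1 - α) * (B⁻¹ 0 0) := by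
  set C := α • A + (1 - α) • B with hCdef
  set z : Fin 2 → ℝ := C⁻¹ *ᵥ Pi.single 0 1 with hz
  obtain ⟨e1, e2⟩ := key_eq hC
  have hsplit : z ⬝ᵥ (C *ᵥ z) = α * (z ⬝ᵥ (A *ᵥ z)) + (1 - α) * (z ⬝ᵥ (B *ᵥ z)) := by
    rw [hCdef, Matrix.add_mulVec, Matrix.smul_mulVec, Matrix.smul_mulVec,
      dotProduct_add, dotProduct_smul, dotProduct_smul]
    simp
  have hAineq := key_ineq hA z
  have hBineq := key_ineq hB z
  have : C⁻¹ 0 0 = 2 * z 0 - z ⬝ᵥ (C *ᵥ z) := by rw [e2, ← e1]; ring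
  rw [this, hsplit]
  nlinarith

private lemma anti_real {A B : Matrix (Fin 2) (Fin 2) ℝ} (hA : A.PosDef)
    (hBA : (B - A).PosSemidef) (hB : B.PosDef) : B⁻¹ 0 0 ≤ A⁻¹ 0 0 := by
  set z : Fin 2 → ℝ := B⁻¹ *ᵥ Pi.single 0 1 with hz
  obtain ⟨e1, e2⟩ := key_eq hB
  have hpos : 0 ≤ z ⬝ᵥ ((B - A) *ᵥ z) := by simpa using hBA.dotProduct_mulVec_nonneg z
  have hsplit : z ⬝ᵥ ((B - A) *ᵥ z) = z ⬝ᵥ (B *ᵥ z) - z ⬝ᵥ (A *ᵥ z) := by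
    rw [Matrix.sub_mulVec, dotProduct_sub]
  have hAineq := key_ineq hA z
  have : B⁻¹ 0 0 = 2 * z 0 - z ⬝ᵥ (B *ᵥ z) := by rw [e2, ← e1]; ring
  linarith

private abbrev X2 : Type := ({0, 1} : Set ℝ)

private noncomputable def mFun : X2 → Matrix (Fin 2) (Fin 2) ℝ :=
  fun x => Matrix.diagonal ![1 - x.1, x.1]

open Classical in
private noncomputable def PsiFun : Matrix (Fin 2) (Fin 2) ℝ → WithTop ℝ :=
  fun A => if A.PosDef then (((A⁻¹) 0 0 : ℝ) : WithTop ℝ) else ⊤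

private lemma Psi_of_posDef {A : Matrix (Fin 2) (Fin 2) ℝ} (h : A.PosDef) :
    PsiFun A = (((A⁻¹) 0 0 : ℝ) : WithTop ℝ) := by simp [PsiFun, h]

private lemma Psi_of_not_posDef {A : Matrix (Fin 2) (Fin 2) ℝ} (h : ¬ A.PosDef) :
    PsiFun A = ⊤ := by simp [PsiFun, h]

private lemma posDef_diag2 {a b : ℝ} (ha : 0 < a) (hb : 0 < b) :
    (Matrix.diagonal ![a, b]).PosDef := by
  rw [Matrix.posDef_diagonal_iff]
  intro i
  fin_cases i <;> simpa

private lemma inv_diag2 {a b : ℝ} (ha : a ≠ 0) (hb : b ≠ 0) :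
    (Matrix.diagonal ![a, b])⁻¹ 0 0 = a⁻¹ := by
  have h : Matrix.diagonal ![a, b] = !![a, 0; 0, b] := by
    ext i j
    fin_cases i <;> fin_cases j <;> simp [Matrix.diagonal]
  rw [h, Matrix.inv_def, Matrix.adjugate_fin_two, Matrix.det_fin_two]
  simp [Ring.inverse_eq_inv']
  field_simp

private lemma Psi_diag2 {a b : ℝ} (ha : 0 < a) (hb : 0 < b) :
    PsiFun (Matrix.diagonal ![a, b]) = ((a⁻¹ : ℝ) : WithTop ℝ) := by
  rw [Psi_of_posDef (posDef_diag2 ha hb), inv_diag2 ha.ne' hb.ne']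

private noncomputable def x2a : X2 := ⟨0, by simp⟩
private noncomputable def x2b : X2 := ⟨1, by simp⟩

private lemma infoMatrix_eq (ξ : Measure X2) [IsProbabilityMeasure ξ] :
    infoMatrix mFun ξ = Matrix.diagonal ![1 - ∫ x : X2, x.1 ∂ξ, ∫ x : X2, x.1 ∂ξ] := by
  have hint : Integrable (fun x : X2 => x.1) ξ := .of_finite
  ext i j
  fin_cases i <;> fin_cases j <;>
    simp [infoMatrix, mFun, Matrix.diagonal,
      integral_sub (integrable_const (1:ℝ)) hint]

private lemma coord_mem (x : X2) : x.1 = 0 ∨ x.1 = 1 := x.2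

private lemma I_nonneg (ξ : Measure X2) [IsProbabilityMeasure ξ] :
    0 ≤ ∫ x : X2, x.1 ∂ξ :=
  integral_nonneg fun x => by rcases coord_mem x with h | h <;> simp [h]

private lemma I_le_one (ξ : Measure X2) [IsProbabilityMeasure ξ] :
    ∫ x : X2, x.1 ∂ξ ≤ 1 := by
  calc ∫ x : X2, x.1 ∂ξ ≤ ∫ _ : X2, (1 : ℝ) ∂ξ := by
        refine integral_mono .of_finite (integrable_const 1) fun x => ?_
        rcases coord_mem x with h | h <;> simp [h]
    _ = 1 := by simp

/-- Lower bound: Ψ of any information matrix is ≥ 1, in fact > 1. -/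
private lemma Psi_gt_one (ξ : Measure X2) [IsProbabilityMeasure ξ] :
    ((1 : ℝ) : WithTop ℝ) < PsiFun (infoMatrix mFun ξ) := by
  rw [infoMatrix_eq ξ]
  set I := ∫ x : X2, x.1 ∂ξ with hI
  by_cases h : (Matrix.diagonal ![1 - I, I]).PosDef
  · have hpos : ∀ i, 0 < (![1 - I, I]) i := Matrix.posDef_diagonal_iff.mp h
    have h0 : 0 < 1 - I := by simpa using hpos 0
    have h1 : 0 < I := by simpa using hpos 1
    rw [Psi_diag2 h0 h1, WithTop.coe_lt_coe]
    have h2 : 1 - I < 1 := by linarith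
    exact (one_lt_inv₀ h0).mpr h2
  · rw [Psi_of_not_posDef h]
    exact WithTop.coe_lt_top 1

/-- The design putting weight `1-t` on x2a and `t` on x2b. -/
private noncomputable def design (t : ℝ) : Measure X2 :=
  ENNReal.ofReal (1 - t) • Measure.dirac x2a + ENNReal.ofReal t • Measure.dirac x2b

private lemma design_prob {t : ℝ} (h0 : 0 ≤ t) (h1 : t ≤ 1) :
    IsProbabilityMeasure (design t) := by
  constructor
  rw [design]
  simp [← ENNReal.ofReal_add (by linarith : (0:ℝ) ≤ 1 - t) h0]

private lemma design_integral {t : ℝ} (h0 : 0 ≤ t) (h1 : t ≤ 1) :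
    ∫ x : X2, x.1 ∂(design t) = t := by
  have h1' : IsFiniteMeasure (ENNReal.ofReal (1 - t) • Measure.dirac x2a) := by
    constructor; simp [lt_top_iff_ne_top]
  have h2' : IsFiniteMeasure (ENNReal.ofReal t • Measure.dirac x2b) := by
    constructor; simp [lt_top_iff_ne_top]
  rw [design, integral_add_measure (μ := ENNReal.ofReal (1 - t) • Measure.dirac x2a)
    (ν := ENNReal.ofReal t • Measure.dirac x2b) .of_finite .of_finite]
  rw [integral_smul_measure, integral_smul_measure, integral_dirac, integral_dirac]
  simp [x2a, x2b, ENNReal.toReal_ofReal h0]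

/-- Nonexistence of optimal designs without lower semicontinuity: there is a compact (two-point)
metric design space `X`, a continuous psd-valued `m`, and a convex, antitonic criterion `Ψ` with
effective domain the positive definite matrices and continuous there (namely the weighted
A-criterion `Ψ(M) = e₁ᵀ M⁻¹ e₁` with `m(x₁) = diag(1,0)`, `m(x₂) = diag(0,1)`), such that
the infimum of `Ψ(M(ξ))` over all designs equals `1` but `Ψ(M(ξ)) > 1` for every design `ξ`. -/
theorem no_optimal_design_example :
    ∃ (X : Type) (_ : MetricSpace X) (_ : CompactSpace X) (_ : MeasurableSpace X)
      (_ : BorelSpace X) (m : X → Matrix (Fin 2) (Fin 2) ℝ)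
      (Ψ : Matrix (Fin 2) (Fin 2) ℝ → WithTop ℝ),
      Continuous m ∧ (∀ x, (m x).PosSemidef) ∧
      (∃ x₁ x₂ : X, x₁ ≠ x₂ ∧ (∀ x : X, x = x₁ ∨ x = x₂) ∧
        m x₁ = Matrix.diagonal ![1, 0] ∧ m x₂ = Matrix.diagonal ![0, 1]) ∧
      (∀ A : Matrix (Fin 2) (Fin 2) ℝ,
        (A.PosDef → Ψ A = (((A⁻¹) 0 0 : ℝ) : WithTop ℝ)) ∧ (¬ A.PosDef → Ψ A = ⊤)) ∧
      (∀ A B : Matrix (Fin 2) (Fin 2) ℝ, A.PosSemidef → B.PosSemidef →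
        ∀ α : ℝ, 0 ≤ α → α ≤ 1 →
          Ψ (α • A + (1 - α) • B) ≤ (α : WithTop ℝ) * Ψ A + ((1 - α : ℝ) : WithTop ℝ) * Ψ B) ∧
      (∀ A B : Matrix (Fin 2) (Fin 2) ℝ, A.PosSemidef → (B - A).PosSemidef → Ψ B ≤ Ψ A) ∧
      ({A : Matrix (Fin 2) (Fin 2) ℝ | A.PosSemidef ∧ Ψ A ≠ ⊤} =
        {A : Matrix (Fin 2) (Fin 2) ℝ | A.PosDef}) ∧
      ContinuousOn (fun A => (Ψ A).untopD 0) {A : Matrix (Fin 2) (Fin 2) ℝ | A.PosDef} ∧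
      IsGLB {r : WithTop ℝ | ∃ ξ : Measure X, IsProbabilityMeasure ξ ∧ r = Ψ (infoMatrix m ξ)}
        ((1 : ℝ) : WithTop ℝ) ∧
      (∀ ξ : Measure X, IsProbabilityMeasure ξ → ((1 : ℝ) : WithTop ℝ) < Ψ (infoMatrix m ξ)) := by
  refine ⟨X2, inferInstance, inferInstance, inferInstance, inferInstance, mFun, PsiFun,
    ?_, ?_, ?_, ?_, ?_, ?_, ?_, ?_, ?_, ?_⟩
  · -- continuity of m
    refine Continuous.matrix_diagonal ?_
    refine continuous_pi fun i => ?_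
    fin_cases i
    · have h : Continuous fun a : X2 => 1 - a.1 := continuous_const.sub continuous_subtype_val
      simpa using h
    · simpa using continuous_subtype_val
  · -- psd
    intro x
    rw [mFun, Matrix.posSemidef_diagonal_iff]
    intro i
    rcases coord_mem x with h | h <;> fin_cases i <;> simp [h]
  · -- two points
    refine ⟨x2a, x2b, ?_, ?_, ?_, ?_⟩
    · simp [x2a, x2b]
    · intro x
      rcases coord_mem x with h | h
      · exact Or.inl (Subtype.ext h)
      · exact Or.inr (Subtype.ext h)
    · show Matrix.diagonal ![1 - (0:ℝ), 0] = _
      norm_num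
    · show Matrix.diagonal ![1 - (1:ℝ), 1] = _
      norm_num
  · -- Ψ spec
    exact fun A => ⟨Psi_of_posDef, Psi_of_not_posDef⟩
  · -- convexity
    intro A B hA hB α hα0 hα1
    rcases eq_or_lt_of_le hα0 with h0 | h0
    · rw [← h0]
      simp
    rcases eq_or_lt_of_le hα1 with h1 | h1
    · rw [h1]
      simp
    by_cases hA' : A.PosDef
    · by_cases hB' : B.PosDef
      · have hC := posDef_conv hA' hB' h0 h1
        rw [Psi_of_posDef hA', Psi_of_posDef hB', Psi_of_posDef hC,
          ← WithTop.coe_mul, ← WithTop.coe_mul, ← WithTop.coe_add, WithTop.coe_le_coe]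
        exact conv_real hA' hB' hα0 hα1 hC
      · rw [Psi_of_not_posDef hB',
          WithTop.mul_top (by exact_mod_cast (by linarith : (1:ℝ) - α ≠ 0)), add_top]
        exact le_top
    · rw [Psi_of_not_posDef hA', WithTop.mul_top (by exact_mod_cast h0.ne'), top_add]
      exact le_top
  · -- antitone
    intro A B hA hBA
    by_cases hA' : A.PosDef
    · have hB' : B.PosDef := by
        have := hA'.add_posSemidef hBA
        simpa using this
      rw [Psi_of_posDef hA', Psi_of_posDef hB', WithTop.coe_le_coe]
      exact anti_real hA' hBA hB'
    · rw [Psi_of_not_posDef hA']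
      exact le_top
  · -- domain
    ext A
    simp only [Set.mem_setOf_eq]
    constructor
    · rintro ⟨hpsd, hne⟩
      by_contra h
      exact hne (Psi_of_not_posDef h)
    · intro h
      exact ⟨h.posSemidef, by rw [Psi_of_posDef h]; exact WithTop.coe_ne_top⟩
  · -- continuity on PD
    have hcont : ContinuousOn (fun A : Matrix (Fin 2) (Fin 2) ℝ =>
        (A.det)⁻¹ * A.adjugate 0 0) {A | A.PosDef} :=
      ((continuous_id.matrix_det).continuousOn.inv₀ fun A hA => hA.det_pos.ne').mul
        ((continuous_id.matrix_adjugate.matrix_elem 0 0).continuousOn)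
    refine hcont.congr fun A hA => ?_
    rw [Psi_of_posDef hA, WithTop.untopD_coe, Matrix.inv_def]
    simp [Ring.inverse_eq_inv']
  · -- IsGLB
    constructor
    · rintro r ⟨ξ, hξ, rfl⟩
      haveI := hξ
      exact le_of_lt (Psi_gt_one ξ)
    · intro c hc
      have key : ∀ ε : ℝ, 0 < ε → c ≤ ((1 + ε : ℝ) : WithTop ℝ) := by
        intro ε hε
        set t : ℝ := ε / (1 + ε) with ht
        have ht0 : 0 < t := by positivity
        have ht1 : t < 1 := by
          rw [ht, div_lt_one (by linarith)]
          linarith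
        haveI := design_prob ht0.le ht1.le
        have hval : PsiFun (infoMatrix mFun (design t)) = ((1 + ε : ℝ) : WithTop ℝ) := by
          rw [infoMatrix_eq (design t), design_integral ht0.le ht1.le,
            Psi_diag2 (by linarith) ht0]
          congr 1
          rw [ht]
          field_simp
          ring
        exact hc ⟨design t, inferInstance, hval.symm⟩
      rcases c with _ | r
      · exact absurd (key 1 one_pos) (WithTop.not_top_le_coe _)
      · refine WithTop.coe_le_coe.mpr ?_
        refine le_of_forall_pos_le_add fun ε hε => ?_
        exact WithTop.coe_le_coe.mp (key ε hε)
  · -- strict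
    intro ξ hξ
    haveI := hξ
    exact Psi_gt_one ξ
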